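/- Let A be a C*-algebra and let a, b be self-adjoint elements of A with a ≤ b. Then the positive part a₊ is Cuntz subequivalent to b₊, i.e., there exists a sequence xₙ in A with ‖a₊ - xₙ b₊ xₙ*‖ → 0. -/

import Mathlib

open Filter Topology

/-- Cuntz subequivalence: `a ≼ b` iff there is a sequence `xₙ` with `‖a - xₙ b xₙ*‖ → 0`. -/
def CuntzBelow {A : Type*} [CStarAlgebra A] (a b : A) : Prop :=
  ∃ x : ℕ → A, Tendsto (fun n => ‖a - x n * b * star (x n)‖) atTop (𝓝 0)

section aux

variable {A : Type*} [CStarAlgebra A] [PartialOrder A] [StarOrderedRing A]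

lemma cuntz_aux (a b : A) (ha : IsSelfAdjoint a) (hb : IsSelfAdjoint b) (hab : a ≤ b)
    {ε : ℝ} (hε : 0 < ε) :
    ∃ x : A, ‖cfc (fun t : ℝ => max t 0) a - x * cfc (fun t : ℝ => max t 0) b * star x‖ ≤ 2 * ε := by
  -- B = b₊
  set B : A := cfc (fun t : ℝ => max t 0) b with hB
  have hBpos : (0 : A) ≤ B := cfc_nonneg fun t _ => le_max_right _ _
  have hbB : b ≤ B := by
    rw [← sub_nonneg]
    have h1 : B - b = cfc (fun t : ℝ => max t 0 - t) b := by
      rw [cfc_sub (fun t : ℝ => max t 0) (fun t : ℝ => t) b (by fun_prop) (by fun_prop),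
        cfc_id' ℝ b hb]
    rw [h1]
    exact cfc_nonneg fun t _ => by simp [le_max_left]
  have haB : a ≤ B := hab.trans hbB
  -- the function g with g(t)² t = (t-ε)₊
  set g : ℝ → ℝ := fun t => Real.sqrt (max (t - ε) 0 / max t ε) with hgdef
  have hgc : Continuous g :=
    Real.continuous_sqrt.comp <| Continuous.div (by fun_prop) (by fun_prop)
      (fun t => (lt_max_of_lt_right hε).ne')
  have hg2 : ∀ t : ℝ, g t * t * g t = max (t - ε) 0 := by
    intro t
    have hden : (0:ℝ) < max t ε := lt_max_of_lt_right hε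
    have hgg : g t * g t = max (t - ε) 0 / max t ε :=
      Real.mul_self_sqrt (div_nonneg (le_max_right _ _) hden.le)
    rw [mul_right_comm, hgg]
    rcases le_or_gt t ε with h | h
    · rw [max_eq_right (sub_nonpos.mpr h), zero_div, zero_mul]
    · rw [max_eq_left h.le]
      exact div_mul_cancel₀ _ (hε.trans h).ne'
  set e : A := cfc g a with he_def
  have he : IsSelfAdjoint e := cfc_predicate g a
  set p : A := cfc (fun t : ℝ => max (t - ε) 0) a with hp_def
  have hp : (0:A) ≤ p := cfc_nonneg fun t _ => le_max_right _ _
  have heae : e * a * e = p := by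
    have h2 : cfc (fun t : ℝ => g t * t) a = e * a := by
      rw [cfc_mul g (fun t : ℝ => t) a hgc.continuousOn (by fun_prop), cfc_id' ℝ a ha]
    have h3 : cfc (fun t : ℝ => (g t * t) * g t) a = e * a * e := by
      rw [cfc_mul _ g a (by fun_prop) hgc.continuousOn, h2]
    rw [← h3, hp_def]
    exact cfc_congr fun t _ => hg2 t
  -- q = e B e
  set q : A := e * B * e with hq_def
  have hq : (0:A) ≤ q := by simpa [he.star_eq] using star_left_conjugate_nonneg hBpos e
  have hq_sa : IsSelfAdjoint q := .of_nonneg hq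
  have hp_sa : IsSelfAdjoint p := .of_nonneg hp
  have hpq : p ≤ q := by
    have h0 : (0:A) ≤ e * (B - a) * e := by
      simpa [he.star_eq] using star_left_conjugate_nonneg (sub_nonneg.mpr haB) e
    have h1 : e * (B - a) * e = q - p := by rw [← heae, hq_def]; noncomm_ring
    rw [h1] at h0; exact sub_nonneg.mp h0
  -- s = sqrt p
  set s : A := cfc Real.sqrt p with hs_def
  have hs : IsSelfAdjoint s := cfc_predicate _ p
  have hspecp : ∀ t ∈ spectrum ℝ p, (0:ℝ) ≤ t := fun t ht => spectrum_nonneg_of_nonneg hp ht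
  have hss : s * s = p := by
    rw [hs_def, ← cfc_mul _ _ p (by fun_prop) (by fun_prop)]
    have h4 : cfc (fun x : ℝ => Real.sqrt x * Real.sqrt x) p = cfc (id : ℝ → ℝ) p :=
      cfc_congr fun t ht => Real.mul_self_sqrt (hspecp t ht)
    rw [h4, cfc_id ℝ p hp_sa]
  -- K and c
  set K1 : ℝ → ℝ := fun u => 1 / max (u + ε) ε with hK1_def
  have hK1c : Continuous K1 :=
    continuous_const.div (by fun_prop) (fun u => (lt_max_of_lt_right hε).ne')
  have hK1nonneg : ∀ u, 0 ≤ K1 u := fun u =>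
    div_nonneg zero_le_one (le_trans hε.le (le_max_right _ _))
  set K : ℝ → ℝ := fun u => ε / max (u + ε) ε with hK_def
  have hKc : Continuous K :=
    continuous_const.div (by fun_prop) (fun u => (lt_max_of_lt_right hε).ne')
  have hKnonneg : ∀ u, 0 ≤ K u := fun u => div_nonneg hε.le (le_trans hε.le (le_max_right _ _))
  have hspecq : ∀ u ∈ spectrum ℝ q, (0:ℝ) ≤ u := fun u hu => spectrum_nonneg_of_nonneg hq hu
  -- generic conjugation computation
  have hconj : ∀ F : ℝ → ℝ, Continuous F → (∀ u, 0 ≤ F u) →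
      cfc (fun u => Real.sqrt (F u)) q * q * cfc (fun u => Real.sqrt (F u)) q
        = cfc (fun u => F u * u) q := by
    intro F hFc hF0
    have hFcc : Continuous fun u => Real.sqrt (F u) := Real.continuous_sqrt.comp hFc
    have h2 : cfc (fun u : ℝ => Real.sqrt (F u) * u) q
        = cfc (fun u => Real.sqrt (F u)) q * q := by
      rw [cfc_mul _ (fun u : ℝ => u) q hFcc.continuousOn (by fun_prop), cfc_id' ℝ q hq_sa]
    have h3 : cfc (fun u : ℝ => (Real.sqrt (F u) * u) * Real.sqrt (F u)) q
        = cfc (fun u => Real.sqrt (F u)) q * q * cfc (fun u => Real.sqrt (F u)) q := by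
      rw [cfc_mul _ _ q (by fun_prop) hFcc.continuousOn, h2]
    rw [← h3]
    exact cfc_congr fun u hu => by
      rw [mul_right_comm, Real.mul_self_sqrt (hF0 u)]
  set c : A := cfc (fun u => Real.sqrt (K1 u)) q with hc_def
  have hc : IsSelfAdjoint c := cfc_predicate _ q
  set d : A := cfc (fun u => Real.sqrt (K u)) q with hd_def
  have hd : IsSelfAdjoint d := cfc_predicate _ q
  have hcqc : c * q * c = cfc (fun u => K1 u * u) q := hconj K1 hK1c hK1nonneg
  have hdqd : d * q * d = cfc (fun u => K u * u) q := hconj K hKc hKnonneg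
  have hdd : d * d = cfc K q := by
    have hKs : Continuous fun u => Real.sqrt (K u) := Real.continuous_sqrt.comp hKc
    rw [hd_def, ← cfc_mul (fun u => Real.sqrt (K u)) (fun u => Real.sqrt (K u)) q
      hKs.continuousOn hKs.continuousOn]
    exact cfc_congr fun u hu => Real.mul_self_sqrt (hKnonneg u)
  have hone : (1:A) - c * q * c = d * d := by
    rw [hcqc, hdd]
    have h1 : (1:A) = cfc (fun _ : ℝ => (1:ℝ)) q := (cfc_const_one ℝ q hq_sa).symm
    rw [h1, ← cfc_sub (fun _ : ℝ => (1:ℝ)) (fun u => K1 u * u) q (by fun_prop)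
      ((hK1c.mul continuous_id).continuousOn)]
    refine cfc_congr fun u hu => ?_
    have hu0 := hspecq u hu
    have hmax : max (u + ε) ε = u + ε := max_eq_left (by linarith)
    rw [hK1_def, hK_def]
    simp only [hmax]
    field_simp
    ring
  -- the element x
  set x : A := s * c * e with hx_def
  have hxBx : x * B * star x = s * (c * q * c) * s := by
    simp only [hx_def, star_mul, he.star_eq, hc.star_eq, hs.star_eq, hq_def]
    noncomm_ring
  have hdiff : p - x * B * star x = s * (d * d) * s := by
    rw [hxBx, ← hone, ← hss]; noncomm_ring
  have hnorm1 : ‖p - x * B * star x‖ ≤ ε := by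
    have hz : p - x * B * star x = star (d * s) * (d * s) := by
      rw [hdiff, star_mul, hd.star_eq, hs.star_eq]; noncomm_ring
    have hzz : (d * s) * star (d * s) = d * p * d := by
      rw [star_mul, hd.star_eq, hs.star_eq, ← hss]; noncomm_ring
    have hdpd_le : d * p * d ≤ d * q * d := by
      have h0 : (0:A) ≤ d * (q - p) * d := by
        simpa [hd.star_eq] using star_left_conjugate_nonneg (sub_nonneg.mpr hpq) d
      have he2 : d * (q - p) * d = d * q * d - d * p * d := by noncomm_ring
      rw [he2] at h0; exact sub_nonneg.mp h0
    have hdpd_nonneg : (0:A) ≤ d * p * d := by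
      simpa [hd.star_eq] using star_left_conjugate_nonneg hp d
    have hnq : ‖d * q * d‖ ≤ ε := by
      rw [hdqd]
      refine norm_cfc_le hε.le fun u hu => ?_
      have hu0 := hspecq u hu
      have hmax : max (u + ε) ε = u + ε := max_eq_left (by linarith)
      rw [Real.norm_eq_abs, abs_of_nonneg (mul_nonneg (hKnonneg u) hu0), hK_def]
      simp only [hmax]
      rw [div_mul_eq_mul_div, div_le_iff₀ (by linarith)]
      nlinarith
    calc ‖p - x * B * star x‖ = ‖star (d * s) * (d * s)‖ := by rw [hz]
      _ = ‖(d * s) * star (d * s)‖ := by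
          rw [CStarRing.norm_star_mul_self, CStarRing.norm_self_mul_star]
      _ = ‖d * p * d‖ := by rw [hzz]
      _ ≤ ‖d * q * d‖ := CStarAlgebra.norm_le_norm_of_nonneg_of_le hdpd_nonneg hdpd_le
      _ ≤ ε := hnq
  have hApp : ‖cfc (fun t : ℝ => max t 0) a - p‖ ≤ ε := by
    rw [hp_def, ← cfc_sub _ _ a (by fun_prop) (by fun_prop)]
    refine norm_cfc_le hε.le fun t _ => ?_
    rw [Real.norm_eq_abs]
    calc |max t 0 - max (t - ε) 0| ≤ |t - (t - ε)| := abs_max_sub_max_le_abs _ _ _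
      _ = ε := by rw [sub_sub_cancel, abs_of_pos hε]
  refine ⟨x, ?_⟩
  calc ‖cfc (fun t : ℝ => max t 0) a - x * B * star x‖
      ≤ ‖cfc (fun t : ℝ => max t 0) a - p‖ + ‖p - x * B * star x‖ :=
        norm_sub_le_norm_sub_add_norm_sub _ _ _
    _ ≤ ε + ε := add_le_add hApp hnorm1
    _ = 2 * ε := by ring

end aux

theorem stmt_0 {A : Type*} [CStarAlgebra A] [PartialOrder A] [StarOrderedRing A] (a b : A)
    (ha : IsSelfAdjoint a) (hb : IsSelfAdjoint b) (hab : a ≤ b) :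
    CuntzBelow (cfc (fun t : ℝ => max t 0) a) (cfc (fun t : ℝ => max t 0) b) := by
  have key : ∀ n : ℕ, ∃ x : A,
      ‖cfc (fun t : ℝ => max t 0) a - x * cfc (fun t : ℝ => max t 0) b * star x‖
        ≤ 2 * (1 / (n + 1)) :=
    fun n => cuntz_aux a b ha hb hab (by positivity)
  choose x hx using key
  refine ⟨x, ?_⟩
  refine squeeze_zero (fun n => norm_nonneg _) hx ?_
  simpa using tendsto_one_div_add_atTop_nhds_zero_nat.const_mul (2:ℝ)
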